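/- Merkle verification is complete: for any list D of 2^d leaves and any index i, the proof consisting of the sibling hashes along the path from leaf i to the root verifies the value D[i] against the Merkle root of D. -/

import Mathlib

variable {α β : Type*}

/-- Root of a complete binary Merkle tree of depth `d` over leaves `D`. -/
def mroot (Hl : α → β) (Hp : β → β → β) : (d : ℕ) → (Fin (2 ^ d) → α) → β
  | 0, D => Hl (D ⟨0, by norm_num⟩)
  | d + 1, D =>
      Hp (mroot Hl Hp d (fun i => D ⟨i.val, by have := i.isLt; simp [pow_succ]; omega⟩))
         (mroot Hl Hp d (fun i => D ⟨2 ^ d + i.val, by have := i.isLt; simp [pow_succ]; omega⟩))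

/-- Merkle verification fold: `mfold Hl Hp v π i t` is `h_{t+1}` in the paper's notation. -/
def mfold (Hl : α → β) (Hp : β → β → β) (v : α) (π : ℕ → β) (i : ℕ) : ℕ → β
  | 0 => Hl v
  | t + 1 =>
      if Nat.testBit i t then Hp (π t) (mfold Hl Hp v π i t)
      else Hp (mfold Hl Hp v π i t) (π t)

/-- Root of the depth-`k` subtree whose leaves are `D[j·2^k], …, D[(j+1)·2^k − 1]`. -/
def subRoot (Hl : α → β) (Hp : β → β → β) (d k : ℕ) (hk : k ≤ d)
    (D : Fin (2 ^ d) → α) (j : Fin (2 ^ (d - k))) : β :=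
  mroot Hl Hp k (fun i => D ⟨j.val * 2 ^ k + i.val, by
    have h1 := j.isLt; have h2 := i.isLt
    calc j.val * 2 ^ k + i.val < (j.val + 1) * 2 ^ k := by nlinarith
    _ ≤ 2 ^ (d - k) * 2 ^ k := by exact Nat.mul_le_mul_right _ (by omega)
    _ = 2 ^ d := by rw [← pow_add]; congr 1; omega⟩)

/-- The canonical sibling-hash inclusion proof for leaf `i`: its `t`-th entry is the
root of the depth-`t` subtree that is the sibling of the depth-`t` subtree
containing leaf `i` (junk beyond level `d`). -/
def siblingProof (Hl : α → β) (Hp : β → β → β) (d : ℕ) (D : Fin (2 ^ d) → α)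
    (i : Fin (2 ^ d)) (t : ℕ) : β :=
  if h : t < d then
    subRoot Hl Hp d t (le_of_lt h) D ⟨(i.val / 2 ^ t) ^^^ 1, by
      have h1 : i.val / 2 ^ t < 2 ^ (d - t) := by
        apply Nat.div_lt_of_lt_mul
        calc i.val < 2 ^ d := i.isLt
        _ = 2 ^ t * 2 ^ (d - t) := by rw [← pow_add]; congr 1; omega
      have h2 : 1 < 2 ^ (d - t) := by
        have : 1 ≤ d - t := by omega
        calc 1 < 2 ^ 1 := by norm_num
        _ ≤ 2 ^ (d - t) := Nat.pow_le_pow_right (by norm_num) this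
      exact Nat.xor_lt_two_pow h1 h2⟩
  else Hl (D ⟨0, by positivity⟩)


private theorem xor1even' (j : ℕ) : 2 * j ^^^ 1 = 2 * j + 1 := by
  apply Nat.eq_of_testBit_eq
  intro k
  rw [Nat.testBit_xor]
  cases k with
  | zero => simp
  | succ k =>
    have : Nat.testBit 1 (k+1) = false := by simp [Nat.testBit_succ]
    rw [this]
    simp only [Nat.testBit_succ, Bool.xor_false]
    congr 1; omega

private theorem xor1odd' (j : ℕ) : (2 * j + 1) ^^^ 1 = 2 * j := by
  apply Nat.eq_of_testBit_eq
  intro k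
  rw [Nat.testBit_xor]
  cases k with
  | zero => simp
  | succ k =>
    have : Nat.testBit 1 (k+1) = false := by simp [Nat.testBit_succ]
    rw [this]
    simp only [Nat.testBit_succ, Bool.xor_false]
    congr 1; omega

private theorem div_lt_aux {d t : ℕ} (ht : t ≤ d) {n : ℕ} (hn : n < 2 ^ d) :
    n / 2 ^ t < 2 ^ (d - t) := by
  apply Nat.div_lt_of_lt_mul
  calc n < 2 ^ d := hn
  _ = 2 ^ t * 2 ^ (d - t) := by rw [← pow_add]; congr 1; omega

private theorem subRoot_succ (Hl : α → β) (Hp : β → β → β) {d k : ℕ} (hk : k + 1 ≤ d)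
    (D : Fin (2 ^ d) → α) (j : Fin (2 ^ (d - (k + 1))))
    (j0 : Fin (2 ^ (d - k))) (j1 : Fin (2 ^ (d - k)))
    (hj0 : j0.val = 2 * j.val) (hj1 : j1.val = 2 * j.val + 1) :
    subRoot Hl Hp d (k + 1) hk D j =
      Hp (subRoot Hl Hp d k (by omega) D j0) (subRoot Hl Hp d k (by omega) D j1) := by
  show Hp _ _ = _
  congr 1 <;> · apply congrArg (mroot Hl Hp k)
                funext i
                apply congrArg D
                apply Fin.ext
                simp only [hj0, hj1, pow_succ]
                ring

private theorem mfold_eq_subRoot (Hl : α → β) (Hp : β → β → β)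
    (d : ℕ) (D : Fin (2 ^ d) → α) (i : Fin (2 ^ d)) :
    ∀ t (ht : t ≤ d), mfold Hl Hp (D i) (siblingProof Hl Hp d D i) i.val t =
      subRoot Hl Hp d t ht D ⟨i.val / 2 ^ t, div_lt_aux ht i.isLt⟩ := by
  intro t
  induction t with
  | zero =>
    intro ht
    show Hl (D i) = mroot Hl Hp 0 _
    show _ = Hl _
    congr 1
    apply congrArg D
    apply Fin.ext
    simp
  | succ t ih =>
    intro ht
    have ht' : t ≤ d := by omega
    have htd : t < d := by omega
    set j : ℕ := i.val / 2 ^ (t + 1) with hj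
    have hdiv : i.val / 2 ^ (t + 1) = (i.val / 2 ^ t) / 2 := by
      rw [pow_succ, Nat.div_div_eq_div_mul]
    have hbit : Nat.testBit i.val t = decide ((i.val / 2 ^ t) % 2 = 1) := by
      rw [Nat.testBit, Nat.shiftRight_eq_div_pow]
      rcases Nat.mod_two_eq_zero_or_one (i.val / 2 ^ t) with h | h <;>
        simp [Nat.and_one_is_mod, h]
    have hsib : siblingProof Hl Hp d D i t =
        subRoot Hl Hp d t ht' D ⟨(i.val / 2 ^ t) ^^^ 1, by
          have h1 : i.val / 2 ^ t < 2 ^ (d - t) := div_lt_aux ht' i.isLt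
          have h2 : 1 < 2 ^ (d - t) := by
            have : 1 ≤ d - t := by omega
            calc 1 < 2 ^ 1 := by norm_num
            _ ≤ 2 ^ (d - t) := Nat.pow_le_pow_right (by norm_num) this
          exact Nat.xor_lt_two_pow h1 h2⟩ := by
      rw [siblingProof, dif_pos htd]
    show (if Nat.testBit i.val t then
        Hp (siblingProof Hl Hp d D i t) (mfold Hl Hp (D i) (siblingProof Hl Hp d D i) i.val t)
      else Hp (mfold Hl Hp (D i) (siblingProof Hl Hp d D i) i.val t) (siblingProof Hl Hp d D i t)) = _
    rcases Nat.mod_two_eq_zero_or_one (i.val / 2 ^ t) with hpar | hpar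
    · -- even: i/2^t = 2*j
      have heq : i.val / 2 ^ t = 2 * j := by omega
      rw [hbit, if_neg (by simp [hpar]), ih ht', hsib,
        subRoot_succ Hl Hp ht D _ ⟨i.val / 2 ^ t, div_lt_aux ht' i.isLt⟩
          ⟨(i.val / 2 ^ t) ^^^ 1, _⟩ heq (by simp only; rw [heq, xor1even'])]
    · -- odd: i/2^t = 2*j+1
      have heq : i.val / 2 ^ t = 2 * j + 1 := by omega
      rw [hbit, if_pos (by simp [hpar]), ih ht', hsib,
        subRoot_succ Hl Hp ht D _ ⟨(i.val / 2 ^ t) ^^^ 1, _⟩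
          ⟨i.val / 2 ^ t, div_lt_aux ht' i.isLt⟩ (by simp only; rw [heq, xor1odd']) heq]

/-- **Completeness of Merkle verification.** For any list `D` of `2 ^ d` leaves and
any index `i`, the proof consisting of the sibling hashes along the path from leaf `i`
to the root verifies the value `D[i]` against the Merkle root of `D`. -/
theorem merkle_verification_complete (Hl : α → β) (Hp : β → β → β)
    (d : ℕ) (D : Fin (2 ^ d) → α) (i : Fin (2 ^ d)) :
    mfold Hl Hp (D i) (siblingProof Hl Hp d D i) i.val d = mroot Hl Hp d D := by
  rw [mfold_eq_subRoot Hl Hp d D i d le_rfl]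
  show mroot Hl Hp d _ = _
  apply congrArg (mroot Hl Hp d)
  funext k
  apply congrArg D
  apply Fin.ext
  simp only
  have : i.val / 2 ^ d = 0 := Nat.div_eq_of_lt i.isLt
  simp [this]
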